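/- Let H be a Hilbert space, H₁ and H₂ Hilbert spaces, and U : H → H₁ ⊗ H₂ a unitary. Let M, N be von Neumann algebras on H with N ⊆ M', and suppose U M U* = B(H₁) ⊗ 1 and M ∨ N = B(H). Then U N U* = 1 ⊗ B(H₂), and consequently M = N'. -/

import Mathlib

section UCDef
variable {H K : Type*}
  [NormedAddCommGroup H] [InnerProductSpace ℂ H] [CompleteSpace H]
  [NormedAddCommGroup K] [InnerProductSpace ℂ K] [CompleteSpace K]

/-- Conjugation of an operator `T` on `H` by a unitary `U : H → K`, i.e. `U T U*`. -/
noncomputable def unitaryConj (U : H ≃ₗᵢ[ℂ] K) (T : H →L[ℂ] H) : K →L[ℂ] K :=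
  (U.toContinuousLinearEquiv.toContinuousLinearMap).comp
    (T.comp U.symm.toContinuousLinearEquiv.toContinuousLinearMap)

end UCDef

noncomputable section
namespace HaagAux
set_option linter.unusedSectionVars false
set_option linter.unusedVariables false
set_option maxHeartbeats 1000000

open scoped ComplexConjugate

/-! ## real-number helpers -/

lemma le_of_sq_le_sq {a b : ℝ} (hb : 0 ≤ b) (h : a ^ (2:ℕ) ≤ b ^ (2:ℕ)) (ha : 0 ≤ a) :
    a ≤ b := by nlinarith

lemma summable_sq_comp {κ : Type*} {f h : κ → ℝ} (hh : Summable h) (hf : ∀ a, 0 ≤ f a)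
    (hle : ∀ a, f a ≤ h a) : Summable f ∧ ∑' a, f a ≤ ∑' a, h a := by
  have h1 : Summable f := Summable.of_nonneg_of_le hf hle hh
  exact ⟨h1, Summable.tsum_le_tsum hle h1 hh⟩

/-- Fubini for doubly-indexed sums of nonnegative reals, given summability of the
columns and of the column sums. -/
lemma double_swap {κ ι : Type*} {F : κ → ι → ℝ} (hF : ∀ a i, 0 ≤ F a i)
    (hsec : ∀ a, Summable fun i => F a i) (hsum : Summable fun a => ∑' i, F a i) :
    (∀ i, Summable fun a => F a i) ∧ (Summable fun i => ∑' a, F a i) ∧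
      ∑' i, ∑' a, F a i = ∑' a, ∑' i, F a i := by
  have hprod : Summable (fun p : κ × ι => F p.1 p.2) :=
    (summable_prod_of_nonneg (fun p => hF p.1 p.2)).2 ⟨hsec, hsum⟩
  have hswap : Summable (fun p : ι × κ => F p.2 p.1) := hprod.prod_symm
  have h1 : ∀ i, Summable fun a => F a i :=
    fun i => ((summable_prod_of_nonneg (fun p => hF p.2 p.1)).1 hswap).1 i
  have h2 : Summable fun i => ∑' a, F a i :=
    ((summable_prod_of_nonneg (fun p => hF p.2 p.1)).1 hswap).2
  exact ⟨h1, h2, Summable.tsum_comm' hprod hsec h1⟩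

/-! ## lp basics -/

section LpBasics

variable {ι : Type*} [DecidableEq ι] {E : ι → Type*} [∀ i, NormedAddCommGroup (E i)]
  [∀ i, NormedSpace ℂ (E i)]

lemma rpow_two_eq (x : ℝ) : x ^ ((2 : ENNReal)).toReal = x ^ (2 : ℕ) := by
  rw [show ((2:ENNReal)).toReal = (2:ℝ) by norm_num,
    show (2:ℝ) = ((2:ℕ):ℝ) by norm_num, Real.rpow_natCast]

lemma memℓp_two_of_summable {f : ∀ i, E i} (h : Summable fun i => ‖f i‖ ^ (2:ℕ)) :
    Memℓp f 2 := by
  apply memℓp_gen; convert h using 2 with i; exact rpow_two_eq _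

lemma summable_norm_sq (f : lp E 2) : Summable fun i => ‖f i‖ ^ (2:ℕ) := by
  have := lp.memℓp f
  rw [memℓp_gen_iff (by norm_num : 0 < ((2:ENNReal)).toReal)] at this
  convert this using 2 with i; exact (rpow_two_eq _).symm

lemma hasSum_norm_sq (f : lp E 2) : HasSum (fun i => ‖f i‖ ^ (2:ℕ)) (‖f‖ ^ (2:ℕ)) := by
  have h := lp.hasSum_norm (E := E) (by norm_num : 0 < ((2:ENNReal)).toReal) f
  convert h using 2 with i
  · exact (rpow_two_eq _).symm
  · exact (rpow_two_eq _).symm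

lemma tsum_norm_sq (f : lp E 2) : ∑' i, ‖f i‖ ^ (2:ℕ) = ‖f‖ ^ (2:ℕ) :=
  (hasSum_norm_sq f).tsum_eq

/-- Coordinate evaluation as a continuous linear map. -/
def lpCoord (i : ι) : lp E 2 →L[ℂ] E i :=
  LinearMap.mkContinuous
    { toFun := fun f => f i
      map_add' := fun f g => by simp [lp.coeFn_add]
      map_smul' := fun c f => by simp [lp.coeFn_smul] }
    1 (fun f => by
      rw [one_mul]; exact lp.norm_apply_le_norm (by norm_num : (2 : ENNReal) ≠ 0) f i)

@[simp] lemma lpCoord_apply (i : ι) (f : lp E 2) : lpCoord i f = f i := rfl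

lemma lp_single_add (i : ι) (v w : E i) :
    lp.single (E := E) 2 i (v + w) = lp.single 2 i v + lp.single 2 i w := by
  apply lp.ext
  funext j
  by_cases h : j = i
  · subst h; simp [lp.single_apply_self, lp.coeFn_add]
  · simp [lp.single_apply_ne _ _ _ h, lp.coeFn_add]

lemma norm_lp_single (i : ι) (v : E i) : ‖lp.single (E := E) 2 i v‖ = ‖v‖ := by
  have h := lp.norm_single (E := E) (p := 2) (by norm_num) i v
  simpa using h

/-- `lp.single` as a continuous linear map. -/
def lpSingle (i : ι) : E i →L[ℂ] lp E 2 :=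
  LinearMap.mkContinuous
    { toFun := fun v => lp.single 2 i v
      map_add' := fun v w => lp_single_add i v w
      map_smul' := fun c v => by simpa using (lp.single_smul (E := E) 2 i v c) }
    1 (fun v => by simp [norm_lp_single])

@[simp] lemma lpSingle_apply (i : ι) (v : E i) : lpSingle i v = lp.single 2 i v := rfl

/-- Two continuous linear maps out of `lp E 2` agreeing on singles are equal. -/
theorem clm_ext_lp {W : Type*} [NormedAddCommGroup W] [NormedSpace ℂ W]
    {F G : lp E 2 →L[ℂ] W}
    (h : ∀ (i : ι) (v : E i), F (lp.single 2 i v) = G (lp.single 2 i v)) : F = G := by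
  ext f
  have hs := lp.hasSum_single (E := E) (p := 2) (by norm_num) f
  have hF : HasSum (fun i => F (lp.single 2 i (f i))) (F f) := hs.mapL F
  have hG : HasSum (fun i => G (lp.single 2 i (f i))) (G f) := hs.mapL G
  rw [funext (fun i => h i (f i))] at hF
  exact hF.unique hG

end LpBasics

/-! ## concrete operators on `K = lp (fun _ : ι => H₁) 2` -/

section Ops

variable {H₁ : Type*} [NormedAddCommGroup H₁] [InnerProductSpace ℂ H₁] [CompleteSpace H₁]
  {ι : Type*} [DecidableEq ι]

local notation "K" => lp (fun _ : ι => H₁) 2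
local notation "ℓι" => lp (fun _ : ι => ℂ) 2
local notation "⟪" x ", " y "⟫" => @inner ℂ _ _ x y

lemma single_coord (j i : ι) (v : H₁) :
    (lp.single (E := fun _ : ι => H₁) 2 j v : ∀ _ : ι, H₁) i = if i = j then v else 0 := by
  rw [lp.single_apply]; split_ifs with h
  · subst h; simp
  · simp [h]

lemma single_coordC (j i : ι) (v : ℂ) :
    (lp.single (E := fun _ : ι => ℂ) 2 j v : ∀ _ : ι, ℂ) i = if i = j then v else 0 := by
  rw [lp.single_apply]; split_ifs with h
  · subst h; simp
  · simp [h]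

/-- generic construction of a continuous linear map into `lp G 2` from coordinates. -/
def mkOp {F : Type*} [NormedAddCommGroup F] [NormedSpace ℂ F]
    {G : ι → Type*} [∀ i, NormedAddCommGroup (G i)] [∀ i, NormedSpace ℂ (G i)]
    (φ : ∀ i, F →L[ℂ] G i) (C : ℝ) (hC : 0 ≤ C)
    (hb : ∀ f, Summable (fun i => ‖φ i f‖ ^ (2:ℕ)) ∧
      ∑' i, ‖φ i f‖ ^ (2:ℕ) ≤ C ^ (2:ℕ) * ‖f‖ ^ (2:ℕ)) :
    F →L[ℂ] lp G 2 :=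
  LinearMap.mkContinuous
    { toFun := fun f => (⟨fun i => φ i f, memℓp_two_of_summable (hb f).1⟩ : lp G 2)
      map_add' := fun f g => by apply lp.ext; funext i; simp [lp.coeFn_add]; rfl
      map_smul' := fun c f => by apply lp.ext; funext i; simp [lp.coeFn_smul] }
    C (fun f => by
      apply le_of_sq_le_sq (by positivity) _ (norm_nonneg _)
      rw [mul_pow, ← tsum_norm_sq]
      exact (hb f).2)

@[simp] lemma mkOp_apply {F : Type*} [NormedAddCommGroup F] [NormedSpace ℂ F]
    {G : ι → Type*} [∀ i, NormedAddCommGroup (G i)] [∀ i, NormedSpace ℂ (G i)]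
    (φ : ∀ i, F →L[ℂ] G i) (C : ℝ) (hC : 0 ≤ C) (hb) (f : F) (i : ι) :
    (mkOp φ C hC hb f : ∀ i, G i) i = φ i f := rfl

lemma bound_data {G : ι → Type*} [∀ i, NormedAddCommGroup (G i)] [∀ i, NormedSpace ℂ (G i)]
    {E : ι → Type*} [∀ i, NormedAddCommGroup (E i)] [∀ i, NormedSpace ℂ (E i)]
    (g : ∀ i, G i) (f : lp E 2) (c : ℝ) (hc : 0 ≤ c) (h : ∀ i, ‖g i‖ ≤ c * ‖f i‖) :
    Summable (fun i => ‖g i‖ ^ (2:ℕ)) ∧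
      ∑' i, ‖g i‖ ^ (2:ℕ) ≤ c ^ (2:ℕ) * ‖f‖ ^ (2:ℕ) := by
  have hle : ∀ i, ‖g i‖ ^ (2:ℕ) ≤ c ^ (2:ℕ) * ‖f i‖ ^ (2:ℕ) := fun i => by
    rw [← mul_pow]
    exact pow_le_pow_left₀ (norm_nonneg _) (h i) 2
  have hs : Summable fun i => c ^ (2:ℕ) * ‖f i‖ ^ (2:ℕ) := (summable_norm_sq f).mul_left _
  have h1 : Summable fun i => ‖g i‖ ^ (2:ℕ) :=
    Summable.of_nonneg_of_le (fun i => by positivity) hle hs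
  refine ⟨h1, ?_⟩
  calc ∑' i, ‖g i‖ ^ (2:ℕ) ≤ ∑' i, c ^ (2:ℕ) * ‖f i‖ ^ (2:ℕ) := Summable.tsum_le_tsum hle h1 hs
    _ = c ^ (2:ℕ) * ∑' i, ‖f i‖ ^ (2:ℕ) := tsum_mul_left
    _ = _ := by rw [tsum_norm_sq]

/-- `V v : ℓ²(ι) → K`, `y ↦ (i ↦ y i • v)`. -/
def V (v : H₁) : ℓι →L[ℂ] K :=
  mkOp (fun i => (lpCoord i).smulRight v) ‖v‖ (norm_nonneg v)
    (fun y => by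
      refine bound_data _ y ‖v‖ (norm_nonneg v) (fun i => ?_)
      simp [norm_smul, mul_comm])

@[simp] lemma V_apply (v : H₁) (y : ℓι) (i : ι) : (V v y : ∀ _ : ι, H₁) i = y i • v := rfl

/-- `Vsharp u : K → ℓ²(ι)`, `f ↦ (i ↦ ⟪u, f i⟫)`. -/
def Vsharp (u : H₁) : K →L[ℂ] ℓι :=
  mkOp (fun i => (innerSL ℂ u).comp (lpCoord i)) ‖u‖ (norm_nonneg u)
    (fun f => by
      refine bound_data _ f ‖u‖ (norm_nonneg u) (fun i => ?_)
      simpa using norm_inner_le_norm (𝕜 := ℂ) u (f i))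

@[simp] lemma Vsharp_apply (u : H₁) (f : K) (i : ι) :
    (Vsharp u f : ∀ _ : ι, ℂ) i = ⟪u, f i⟫ := rfl

/-- componentwise operator `a ⊗ 1`. -/
def compOp (a : H₁ →L[ℂ] H₁) : K →L[ℂ] K :=
  mkOp (fun i => a.comp (lpCoord i)) ‖a‖ (norm_nonneg a)
    (fun f => bound_data _ f ‖a‖ (norm_nonneg a) (fun i => a.le_opNorm (f i)))

@[simp] lemma compOp_apply (a : H₁ →L[ℂ] H₁) (f : K) (i : ι) :
    (compOp a f : ∀ _ : ι, H₁) i = a (f i) := rfl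

/-- standard basis of `ℓ²(ι)`. -/
def el (j : ι) : ℓι := lp.single 2 j (1 : ℂ)

lemma single_eq_smul_el (j : ι) (z : ℂ) :
    lp.single (E := fun _ : ι => ℂ) 2 j z = z • el j := by
  rw [el, ← lp.single_smul]; norm_num

lemma V_el (v : H₁) (j : ι) : V v (el j) = lp.single 2 j v := by
  apply lp.ext; funext i
  have h1 : (V v (el j) : ∀ _ : ι, H₁) i = (el j : ∀ _ : ι, ℂ) i • v := rfl
  rw [h1, el, single_coordC, single_coord]
  split_ifs <;> simp

lemma Vsharp_single (u : H₁) (j : ι) (w : H₁) :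
    Vsharp u (lp.single 2 j w) = lp.single 2 j ⟪u, w⟫ := by
  apply lp.ext; funext i
  rw [Vsharp_apply, single_coord, single_coordC]
  split_ifs <;> simp

lemma compOp_single (a : H₁ →L[ℂ] H₁) (j : ι) (v : H₁) :
    compOp a (lp.single 2 j v) = lp.single 2 j (a v) := by
  apply lp.ext; funext i
  rw [compOp_apply, single_coord, single_coord]
  split_ifs <;> simp

end Ops

/-! ## the algebras `A = B(H₁) ⊗ 1` and `B = 1 ⊗ B(H₂)` -/

section Sets

variable {H₁ : Type*} [NormedAddCommGroup H₁] [InnerProductSpace ℂ H₁] [CompleteSpace H₁]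
  {ι : Type*} [DecidableEq ι]

local notation "K" => lp (fun _ : ι => H₁) 2
local notation "ℓι" => lp (fun _ : ι => ℂ) 2
local notation "⟪" x ", " y "⟫" => @inner ℂ _ _ x y

/-- the componentwise-acting operators. -/
def ASet : Set (K →L[ℂ] K) :=
  {T | ∃ a : H₁ →L[ℂ] H₁, ∀ (f : K) (i : ι), (T f : ∀ _ : ι, H₁) i = a ((f : ∀ _ : ι, H₁) i)}

/-- the operators with scalar matrix entries. -/
def BSet : Set (K →L[ℂ] K) :=
  {T | ∀ i j : ι, ∃ c : ℂ, ∀ v : H₁, (T (lp.single 2 j v) : ∀ _ : ι, H₁) i = c • v}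

lemma compOp_mem_ASet (a : H₁ →L[ℂ] H₁) : compOp a ∈ (ASet (H₁ := H₁) (ι := ι)) :=
  ⟨a, fun f i => rfl⟩

lemma eq_compOp_of_mem_ASet {T : K →L[ℂ] K} (hT : T ∈ ASet) : ∃ a, T = compOp a := by
  obtain ⟨a, ha⟩ := hT
  refine ⟨a, ?_⟩
  refine ContinuousLinearMap.ext fun f => ?_
  apply lp.ext; funext i
  rw [ha f i]; rfl

/-- An operator sending each `single j v` to `single j (a v)` is componentwise. -/
lemma mem_ASet_of_single {S : K →L[ℂ] K} {a : H₁ →L[ℂ] H₁}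
    (h : ∀ (j : ι) (v : H₁), S (lp.single 2 j v) = lp.single 2 j (a v)) : S ∈ ASet := by
  refine ⟨a, fun f i => ?_⟩
  have hs := lp.hasSum_single (E := fun _ : ι => H₁) (p := 2) (by norm_num) f
  have hS : HasSum (fun j => S (lp.single 2 j (f j))) (S f) := hs.mapL S
  have h2 : HasSum (fun j => (lp.single (E := fun _ : ι => H₁) 2 j (a (f j)))) (S f) := by
    rwa [funext (fun j => h j (f j))] at hS
  have h3 : HasSum (fun j => ((lp.single (E := fun _ : ι => H₁) 2 j (a (f j)) : ∀ _ : ι, H₁) i))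
      ((S f : ∀ _ : ι, H₁) i) := h2.mapL (lpCoord i)
  have h4 : HasSum (fun j => if j = i then a (f i) else 0) ((S f : ∀ _ : ι, H₁) i) := by
    convert h3 using 2 with j
    rw [single_coord]
    split_ifs with ha hb hc hd
    · subst ha; rfl
    · exact absurd ha.symm hb
    · exact absurd hc.symm ha
    · rfl
  exact (h4.unique (hasSum_ite_eq i (a (f i))))

variable (v₀ : H₁) (hv₀ : ‖v₀‖ = 1)

lemma inner_v₀ (hv₀ : ‖v₀‖ = 1) : (⟪v₀, v₀⟫ : ℂ) = 1 := by
  rw [inner_self_eq_norm_sq_to_K, hv₀]; norm_num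

include hv₀ in
/-- `A' = B`. -/
lemma centralizer_ASet_eq_BSet :
    Set.centralizer (ASet (H₁ := H₁) (ι := ι)) = BSet := by
  ext T
  constructor
  · intro hT i j
    refine ⟨⟪v₀, (T (lp.single 2 j v₀) : ∀ _ : ι, H₁) i⟫, fun x => ?_⟩
    set a : H₁ →L[ℂ] H₁ := (innerSL ℂ v₀).smulRight x with ha
    have hcomm := Set.mem_centralizer_iff.mp hT _ (compOp_mem_ASet a)
    have happ := congrArg (fun (W : K →L[ℂ] K) => (W (lp.single 2 j v₀) : ∀ _ : ι, H₁) i) hcomm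
    simp only [ContinuousLinearMap.mul_apply] at happ
    -- LHS : compOp a (T (single j v₀)) at i = ⟪v₀, _⟫ • x
    -- RHS : T (compOp a (single j v₀)) = T (single j x)
    have hL : (compOp a (T (lp.single 2 j v₀)) : ∀ _ : ι, H₁) i
        = ⟪v₀, (T (lp.single 2 j v₀) : ∀ _ : ι, H₁) i⟫ • x := by
      rw [compOp_apply, ha]; simp
    have hR : T (compOp a (lp.single 2 j v₀)) = T (lp.single 2 j x) := by
      rw [compOp_single]
      congr 1
      rw [ha]
      congr 1
      simp [inner_v₀ v₀ hv₀, hv₀]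
    rw [hL, hR] at happ
    exact happ.symm
  · intro hT
    intro m hm
    obtain ⟨a, rfl⟩ := eq_compOp_of_mem_ASet hm
    have key : ∀ (j : ι) (v : H₁),
        compOp a (T (lp.single 2 j v)) = T (compOp a (lp.single 2 j v)) := by
      intro j v
      rw [compOp_single]
      apply lp.ext; funext i
      obtain ⟨c, hc⟩ := hT i j
      rw [compOp_apply, hc v, hc (a v)]
      simp
    have : (compOp a) * T = T * (compOp a) := by
      apply clm_ext_lp (fun j v => ?_)
      simp only [ContinuousLinearMap.mul_apply]
      exact key j v
    exact this

/-- operators commuting with everything are scalar. -/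
lemma scalar_of_mem_centralizer_univ [Nonempty ι] {T : K →L[ℂ] K}
    (hT : T ∈ Set.centralizer (Set.univ : Set (K →L[ℂ] K))) (hv₀ : ‖v₀‖ = 1) :
    ∃ c : ℂ, T = c • 1 := by
  classical
  obtain ⟨j₀⟩ := ‹Nonempty ι›
  set e : K := lp.single 2 j₀ v₀ with he
  have hee : (⟪e, e⟫ : ℂ) = 1 := by
    rw [he, lp.inner_single_left]
    rw [lp.single_apply_self]
    exact inner_v₀ v₀ hv₀
  refine ⟨⟪e, T e⟫, ?_⟩
  refine ContinuousLinearMap.ext fun x => ?_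
  have hcomm := Set.mem_centralizer_iff.mp hT _ (Set.mem_univ ((innerSL ℂ e).smulRight x))
  have happ := congrArg (fun (W : K →L[ℂ] K) => W e) hcomm
  simp only [ContinuousLinearMap.mul_apply] at happ
  have hL : ((innerSL ℂ e).smulRight x) (T e) = ⟪e, T e⟫ • x := by simp
  have hR : T (((innerSL ℂ e).smulRight x) e) = T x := by
    have : ((innerSL ℂ e).smulRight x) e = x := by simp [hee, he, norm_lp_single, hv₀]
    rw [this]
  rw [hL, hR] at happ
  simp only [ContinuousLinearMap.smul_apply, ContinuousLinearMap.one_apply]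
  exact happ.symm

end Sets

/-! ## the induced matrix `ψ p` on `ℓ²(ι)` of an operator `p ∈ B` -/

section Psi

variable {H₁ : Type*} [NormedAddCommGroup H₁] [InnerProductSpace ℂ H₁] [CompleteSpace H₁]
  {ι : Type*} [DecidableEq ι]

local notation "K" => lp (fun _ : ι => H₁) 2
local notation "ℓι" => lp (fun _ : ι => ℂ) 2
local notation "⟪" x ", " y "⟫" => @inner ℂ _ _ x y

/-- the scalar matrix of `p`, as an operator on `ℓ²(ι)`. -/
def psi (v₀ : H₁) (p : K →L[ℂ] K) : ℓι →L[ℂ] ℓι := (Vsharp v₀).comp (p.comp (V v₀))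

lemma psi_el_coord {v₀ : H₁} (hv₀ : ‖v₀‖ = 1) {p : lp (fun _ : ι => H₁) 2 →L[ℂ] lp (fun _ : ι => H₁) 2}
    {c : ι → ι → ℂ}
    (hp : ∀ (i j : ι) (v : H₁), (p (lp.single 2 j v) : ∀ _ : ι, H₁) i = c i j • v) (i j : ι) : (psi v₀ p (el j) : ∀ _ : ι, ℂ) i = c i j := by
  have h1 : psi v₀ p (el j) = Vsharp v₀ (p (lp.single 2 j v₀)) := by
    rw [psi]
    simp only [ContinuousLinearMap.comp_apply, V_el]
  rw [h1, Vsharp_apply, hp i j v₀, inner_smul_right, inner_v₀ v₀ hv₀, mul_one]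

lemma p_comp_V {v₀ : H₁} (hv₀ : ‖v₀‖ = 1) {p : lp (fun _ : ι => H₁) 2 →L[ℂ] lp (fun _ : ι => H₁) 2}
    {c : ι → ι → ℂ}
    (hp : ∀ (i j : ι) (v : H₁), (p (lp.single 2 j v) : ∀ _ : ι, H₁) i = c i j • v) (v : H₁) : p.comp (V v) = (V v).comp (psi v₀ p) := by
  have hel : ∀ j, p (V v (el j)) = V v (psi v₀ p (el j)) := by
    intro j
    rw [V_el]
    apply lp.ext; funext i
    rw [hp i j v, V_apply, psi_el_coord hv₀ hp]
  apply clm_ext_lp; intro j z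
  simp only [ContinuousLinearMap.comp_apply, single_eq_smul_el, map_smul]
  rw [hel j]

lemma Vsharp_comp_p {v₀ : H₁} (hv₀ : ‖v₀‖ = 1) {p : lp (fun _ : ι => H₁) 2 →L[ℂ] lp (fun _ : ι => H₁) 2}
    {c : ι → ι → ℂ}
    (hp : ∀ (i j : ι) (v : H₁), (p (lp.single 2 j v) : ∀ _ : ι, H₁) i = c i j • v) (u : H₁) : (Vsharp u).comp p = (psi v₀ p).comp (Vsharp u) := by
  apply clm_ext_lp; intro j w
  simp only [ContinuousLinearMap.comp_apply]
  rw [Vsharp_single, single_eq_smul_el, map_smul]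
  apply lp.ext; funext i
  rw [Vsharp_apply, hp i j w, inner_smul_right]
  have h2 : ((⟪u, w⟫ • psi v₀ p (el j) : ℓι) : ∀ _ : ι, ℂ) i
      = ⟪u, w⟫ * (psi v₀ p (el j) : ∀ _ : ι, ℂ) i := by
    rw [lp.coeFn_smul]; rfl
  rw [h2, psi_el_coord hv₀ hp]; ring

end Psi

/-! ## the operator `1 ⊗ Y` on `K` induced by `Y : ℓ²(ι) → ℓ²(ι)` -/

section OneTensor

variable {H₁ : Type*} [NormedAddCommGroup H₁] [InnerProductSpace ℂ H₁] [CompleteSpace H₁]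
  {ι : Type*} [DecidableEq ι] {κ : Type*} [DecidableEq κ]

local notation "K" => lp (fun _ : ι => H₁) 2
local notation "ℓι" => lp (fun _ : ι => ℂ) 2
local notation "ℓκ" => lp (fun _ : κ => ℂ) 2
local notation "⟪" x ", " y "⟫" => @inner ℂ _ _ x y

/-- Parseval for the slices of `g : K` along a Hilbert basis of `H₁`. -/
lemma slices_bound (b : HilbertBasis κ ℂ H₁) (g : K) :
    (Summable fun α => ‖Vsharp (b α) g‖ ^ (2:ℕ)) ∧
      ∑' α, ‖Vsharp (b α) g‖ ^ (2:ℕ) = ‖g‖ ^ (2:ℕ) := by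
  have hFsec : ∀ i : ι, Summable fun α : κ =>
      ‖(b.repr ((g : ∀ _ : ι, H₁) i) : ∀ _ : κ, ℂ) α‖ ^ (2:ℕ) :=
    fun i => summable_norm_sq _
  have hsecsum : ∀ i : ι, (∑' α : κ, ‖(b.repr ((g : ∀ _ : ι, H₁) i) : ∀ _ : κ, ℂ) α‖ ^ (2:ℕ))
      = ‖(g : ∀ _ : ι, H₁) i‖ ^ (2:ℕ) := by
    intro i
    rw [tsum_norm_sq, b.repr.norm_map]
  have hsum : Summable fun i : ι =>
      ∑' α : κ, ‖(b.repr ((g : ∀ _ : ι, H₁) i) : ∀ _ : κ, ℂ) α‖ ^ (2:ℕ) :=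
    (summable_norm_sq g).congr (fun i => (hsecsum i).symm)
  obtain ⟨h1, h2, h3⟩ := double_swap
    (F := fun (i : ι) (α : κ) => ‖(b.repr ((g : ∀ _ : ι, H₁) i) : ∀ _ : κ, ℂ) α‖ ^ (2:ℕ))
    (fun i α => by positivity) hFsec hsum
  have hV : ∀ α : κ, ‖Vsharp (b α) g‖ ^ (2:ℕ)
      = ∑' i : ι, ‖(b.repr ((g : ∀ _ : ι, H₁) i) : ∀ _ : κ, ℂ) α‖ ^ (2:ℕ) := by
    intro α
    rw [← tsum_norm_sq (Vsharp (b α) g)]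
    refine tsum_congr fun i => ?_
    congr 1
    have hx : (Vsharp (b α) g : ∀ _ : ι, ℂ) i = ⟪b α, (g : ∀ _ : ι, H₁) i⟫ := rfl
    rw [hx, ← b.repr_apply_apply]
  constructor
  · exact h2.congr fun α => (hV α).symm
  · calc ∑' α : κ, ‖Vsharp (b α) g‖ ^ (2:ℕ)
        = ∑' α : κ, ∑' i : ι, ‖(b.repr ((g : ∀ _ : ι, H₁) i) : ∀ _ : κ, ℂ) α‖ ^ (2:ℕ) :=
          tsum_congr hV
      _ = ∑' i : ι, ∑' α : κ, ‖(b.repr ((g : ∀ _ : ι, H₁) i) : ∀ _ : κ, ℂ) α‖ ^ (2:ℕ) := h3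
      _ = ∑' i : ι, ‖(g : ∀ _ : ι, H₁) i‖ ^ (2:ℕ) := tsum_congr hsecsum
      _ = ‖g‖ ^ (2:ℕ) := tsum_norm_sq g

lemma Yslices_bound (b : HilbertBasis κ ℂ H₁) (Y : ℓι →L[ℂ] ℓι) (g : K) :
    (Summable fun α => ‖Y (Vsharp (b α) g)‖ ^ (2:ℕ)) ∧
      ∑' α, ‖Y (Vsharp (b α) g)‖ ^ (2:ℕ) ≤ ‖Y‖ ^ (2:ℕ) * ‖g‖ ^ (2:ℕ) := by
  obtain ⟨hs, he⟩ := slices_bound b g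
  have hcomp := summable_sq_comp (f := fun α => ‖Y (Vsharp (b α) g)‖ ^ (2:ℕ))
    (h := fun α => ‖Y‖ ^ (2:ℕ) * ‖Vsharp (b α) g‖ ^ (2:ℕ)) (hs.mul_left _)
    (fun α => by positivity)
    (fun α => by
      rw [← mul_pow]
      exact pow_le_pow_left₀ (norm_nonneg _) (Y.le_opNorm _) 2)
  refine ⟨hcomp.1, hcomp.2.trans ?_⟩
  rw [tsum_mul_left, he]

/-- coordinate `i` of `1 ⊗ Y`, valued in the coefficient space `ℓ²(κ)`. -/
def oneTensorAux (b : HilbertBasis κ ℂ H₁) (Y : ℓι →L[ℂ] ℓι) (i : ι) : K →L[ℂ] ℓκ :=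
  mkOp (fun α => (lpCoord i).comp (Y.comp (Vsharp (b α)))) ‖Y‖ (norm_nonneg Y)
    (fun g => by
      have h0 := Yslices_bound b Y g
      have hcomp := summable_sq_comp
        (f := fun α => ‖(lpCoord i).comp (Y.comp (Vsharp (b α))) g‖ ^ (2:ℕ))
        (h := fun α => ‖Y (Vsharp (b α) g)‖ ^ (2:ℕ)) h0.1
        (fun α => by positivity)
        (fun α => by
          apply pow_le_pow_left₀ (norm_nonneg _) _ 2
          exact lp.norm_apply_le_norm (by norm_num : (2 : ENNReal) ≠ 0) (Y (Vsharp (b α) g)) i)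
      exact ⟨hcomp.1, hcomp.2.trans h0.2⟩)

@[simp] lemma oneTensorAux_apply (b : HilbertBasis κ ℂ H₁) (Y : ℓι →L[ℂ] ℓι) (i : ι) (g : K)
    (α : κ) : (oneTensorAux b Y i g : ∀ _ : κ, ℂ) α = (Y (Vsharp (b α) g) : ∀ _ : ι, ℂ) i := rfl

/-- `1 ⊗ Y` as an operator on `K`. -/
def oneTensor (b : HilbertBasis κ ℂ H₁) (Y : ℓι →L[ℂ] ℓι) : K →L[ℂ] K :=
  mkOp (fun i => (b.repr.symm.toLinearIsometry.toContinuousLinearMap).comp (oneTensorAux b Y i))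
    ‖Y‖ (norm_nonneg Y)
    (fun g => by
      have hnorm : ∀ i, ‖(b.repr.symm.toLinearIsometry.toContinuousLinearMap).comp
          (oneTensorAux b Y i) g‖ ^ (2:ℕ) = ∑' α, ‖(Y (Vsharp (b α) g) : ∀ _ : ι, ℂ) i‖ ^ (2:ℕ) := by
        intro i
        have h1 : ‖(b.repr.symm.toLinearIsometry.toContinuousLinearMap).comp
            (oneTensorAux b Y i) g‖ = ‖oneTensorAux b Y i g‖ := by
          simp only [ContinuousLinearMap.comp_apply]
          exact b.repr.symm.toLinearIsometry.norm_map _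
        rw [h1, ← tsum_norm_sq (oneTensorAux b Y i g)]
        exact tsum_congr fun α => rfl
      set F : κ → ι → ℝ := fun α i => ‖(Y (Vsharp (b α) g) : ∀ _ : ι, ℂ) i‖ ^ (2:ℕ) with hF
      have hYs := Yslices_bound b Y g
      have hsec : ∀ α, Summable fun i => F α i := fun α => summable_norm_sq _
      have hsum : Summable fun α => ∑' i, F α i := by
        refine hYs.1.congr fun α => ?_
        exact (tsum_norm_sq (Y (Vsharp (b α) g))).symm
      obtain ⟨h1, h2, h3⟩ := double_swap (fun α i => by positivity) hsec hsum
      constructor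
      · refine h2.congr fun i => (hnorm i).symm
      · have h4 : ∑' i, ‖(b.repr.symm.toLinearIsometry.toContinuousLinearMap).comp
            (oneTensorAux b Y i) g‖ ^ (2:ℕ) = ∑' i, ∑' α, F α i := by
          congr 1; funext i; exact hnorm i
        rw [h4, h3]
        have h5 : ∑' α, ∑' i, F α i = ∑' α, ‖Y (Vsharp (b α) g)‖ ^ (2:ℕ) := by
          congr 1; funext α; exact tsum_norm_sq (Y (Vsharp (b α) g))
        rw [h5]
        exact hYs.2)

lemma oneTensor_single (b : HilbertBasis κ ℂ H₁) (Y : ℓι →L[ℂ] ℓι) (j : ι) (v : H₁) :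
    oneTensor b Y (lp.single 2 j v) = V v (Y (el j)) := by
  apply lp.ext; funext i
  have hcoord : oneTensorAux b Y i (lp.single 2 j v)
      = ((Y (el j) : ∀ _ : ι, ℂ) i) • b.repr v := by
    apply lp.ext; funext α
    have h1 : (oneTensorAux b Y i (lp.single 2 j v) : ∀ _ : κ, ℂ) α
        = (Y (Vsharp (b α) (lp.single 2 j v)) : ∀ _ : ι, ℂ) i := rfl
    rw [h1, Vsharp_single, single_eq_smul_el, map_smul]
    have h2 : ((⟪b α, v⟫ • Y (el j) : ℓι) : ∀ _ : ι, ℂ) i = ⟪b α, v⟫ * (Y (el j) : ∀ _ : ι, ℂ) i := by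
      rw [lp.coeFn_smul]; rfl
    rw [h2]
    have h3 : (((Y (el j) : ∀ _ : ι, ℂ) i • b.repr v : ℓκ) : ∀ _ : κ, ℂ) α
        = (Y (el j) : ∀ _ : ι, ℂ) i * (b.repr v : ∀ _ : κ, ℂ) α := by
      rw [lp.coeFn_smul]; rfl
    rw [h3, b.repr_apply_apply]
    ring
  have hL : (oneTensor b Y (lp.single 2 j v) : ∀ _ : ι, H₁) i
      = b.repr.symm (oneTensorAux b Y i (lp.single 2 j v)) := rfl
  rw [hL, hcoord, map_smul, b.repr.symm_apply_apply]
  rfl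

lemma oneTensor_mem_BSet (b : HilbertBasis κ ℂ H₁) (Y : ℓι →L[ℂ] ℓι) :
    oneTensor b Y ∈ BSet (H₁ := H₁) (ι := ι) := by
  intro i j
  refine ⟨(Y (el j) : ∀ _ : ι, ℂ) i, fun v => ?_⟩
  rw [oneTensor_single]
  rfl

lemma oneTensor_comp_V (b : HilbertBasis κ ℂ H₁) (Y : ℓι →L[ℂ] ℓι) (v : H₁) :
    (oneTensor b Y).comp (V v) = (V v).comp Y := by
  apply clm_ext_lp; intro j z
  simp only [ContinuousLinearMap.comp_apply, single_eq_smul_el, map_smul]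
  rw [V_el, oneTensor_single]

end OneTensor

/-! ## the core lemma: the commutant of `P` is contained in `A` -/

section Core

variable {H₁ : Type*} [NormedAddCommGroup H₁] [InnerProductSpace ℂ H₁] [CompleteSpace H₁]
  {ι : Type*} [DecidableEq ι]

local notation "K" => lp (fun _ : ι => H₁) 2
local notation "ℓι" => lp (fun _ : ι => ℂ) 2
local notation "⟪" x ", " y "⟫" => @inner ℂ _ _ x y

theorem centralizer_subset_ASet [Nonempty ι] {v₀ : H₁} (hv₀ : ‖v₀‖ = 1)
    {P : Set (K →L[ℂ] K)} (hPB : P ⊆ BSet)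
    (hscal : ∀ W : K →L[ℂ] K, W ∈ BSet → W ∈ Set.centralizer P →
      ∃ c : ℂ, W = c • (1 : K →L[ℂ] K)) :
    Set.centralizer P ⊆ ASet := by
  classical
  obtain ⟨Ω, b, -⟩ := exists_hilbertBasis ℂ H₁
  intro S hS
  -- the commutation relations satisfied by each p ∈ P
  have hpfacts : ∀ p ∈ P, ∀ v : H₁, p.comp (V v) = (V v).comp (psi v₀ p) := by
    intro p hp v
    obtain ⟨c, hc⟩ : ∃ c : ι → ι → ℂ, ∀ (i j : ι) (v : H₁),
        (p (lp.single 2 j v) : ∀ _ : ι, H₁) i = c i j • v := by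
      choose c hc using hPB hp
      exact ⟨c, fun i j v => hc i j v⟩
    exact p_comp_V hv₀ hc v
  have hpfacts' : ∀ p ∈ P, ∀ u : H₁, (Vsharp u).comp p = (psi v₀ p).comp (Vsharp u) := by
    intro p hp u
    obtain ⟨c, hc⟩ : ∃ c : ι → ι → ℂ, ∀ (i j : ι) (v : H₁),
        (p (lp.single 2 j v) : ∀ _ : ι, H₁) i = c i j • v := by
      choose c hc using hPB hp
      exact ⟨c, fun i j v => hc i j v⟩
    exact Vsharp_comp_p hv₀ hc u
  -- the key scalar-matrix property of the slices of S
  have key : ∀ u v : H₁, ∃ lam : ℂ, ∀ i j : ι,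
      ⟪u, (S (lp.single 2 j v) : ∀ _ : ι, H₁) i⟫ = if i = j then lam else 0 := by
    intro u v
    set Y : ℓι →L[ℂ] ℓι := (Vsharp u).comp (S.comp (V v)) with hY
    have hYpsi : ∀ p ∈ P, Y.comp (psi v₀ p) = (psi v₀ p).comp Y := by
      intro p hp
      have hSp : p * S = S * p := Set.mem_centralizer_iff.mp hS p hp
      have h1 : ∀ y : ℓι, Y (psi v₀ p y) = psi v₀ p (Y y) := by
        intro y
        have e1 : V v (psi v₀ p y) = p (V v y) := by
          have := congrArg (fun (W : ℓι →L[ℂ] K) => W y) (hpfacts p hp v)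
          simpa using this.symm
        have e2 : S (p (V v y)) = p (S (V v y)) := by
          have := congrArg (fun (W : K →L[ℂ] K) => W (V v y)) hSp
          simpa [ContinuousLinearMap.mul_apply] using this.symm
        have e3 : Vsharp u (p (S (V v y))) = psi v₀ p (Vsharp u (S (V v y))) := by
          have := congrArg (fun (W : K →L[ℂ] ℓι) => W (S (V v y))) (hpfacts' p hp u)
          simpa using this
        rw [hY]
        simp only [ContinuousLinearMap.comp_apply]
        rw [e1, e2, e3]
      exact ContinuousLinearMap.ext fun y => by
        simpa [ContinuousLinearMap.comp_apply] using h1 y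
    set W : K →L[ℂ] K := oneTensor b Y with hW
    have hWB : W ∈ BSet (H₁ := H₁) (ι := ι) := oneTensor_mem_BSet b Y
    have hWP : W ∈ Set.centralizer P := by
      intro p hp
      apply clm_ext_lp; intro j w
      simp only [ContinuousLinearMap.mul_apply]
      -- p (W (single j w)) = W (p (single j w))
      have e1 : W (lp.single 2 j w) = V w (Y (el j)) := oneTensor_single b Y j w
      have e2 : p (V w (Y (el j))) = V w (psi v₀ p (Y (el j))) := by
        have := congrArg (fun (T : ℓι →L[ℂ] K) => T (Y (el j))) (hpfacts p hp w)
        simpa using this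
      have e3 : p (lp.single 2 j w) = V w (psi v₀ p (el j)) := by
        have := congrArg (fun (T : ℓι →L[ℂ] K) => T (el j)) (hpfacts p hp w)
        simpa [V_el] using this
      have e4 : W (V w (psi v₀ p (el j))) = V w (Y (psi v₀ p (el j))) := by
        have := congrArg (fun (T : ℓι →L[ℂ] K) => T (psi v₀ p (el j))) (oneTensor_comp_V b Y w)
        simpa using this
      have e5 : Y (psi v₀ p (el j)) = psi v₀ p (Y (el j)) := by
        have := congrArg (fun (T : ℓι →L[ℂ] ℓι) => T (el j)) (hYpsi p hp)
        simpa using this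
      rw [e1, e2, e3, e4, e5]
    obtain ⟨lam, hlam⟩ := hscal W hWB hWP
    refine ⟨lam, fun i j => ?_⟩
    -- evaluate W at single j v₀ in coordinate i
    have h6 : W (lp.single 2 j v₀) = V v₀ (Y (el j)) := oneTensor_single b Y j v₀
    have h7 : (W (lp.single 2 j v₀) : ∀ _ : ι, H₁) i = (Y (el j) : ∀ _ : ι, ℂ) i • v₀ := by
      rw [h6]; rfl
    have h8 : (W (lp.single 2 j v₀) : ∀ _ : ι, H₁) i
        = lam • (lp.single (E := fun _ : ι => H₁) 2 j v₀ : ∀ _ : ι, H₁) i := by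
      rw [hlam]
      simp only [ContinuousLinearMap.smul_apply, ContinuousLinearMap.one_apply]
      rw [lp.coeFn_smul]; rfl
    have h9 : (Y (el j) : ∀ _ : ι, ℂ) i = if i = j then lam else 0 := by
      have h10 := h7.symm.trans h8
      rw [single_coord] at h10
      have h11 := congrArg (fun z => (⟪v₀, z⟫ : ℂ)) h10
      simp only [inner_smul_right] at h11
      split_ifs with hij
      · simp only [if_pos hij, inner_v₀ v₀ hv₀, mul_one] at h11
        exact h11
      · simp only [if_neg hij, inner_zero_right, mul_zero, inner_v₀ v₀ hv₀, mul_one] at h11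
        exact h11
    have h12 : (Y (el j) : ∀ _ : ι, ℂ) i = ⟪u, (S (lp.single 2 j v) : ∀ _ : ι, H₁) i⟫ := by
      rw [hY]
      simp only [ContinuousLinearMap.comp_apply]
      rw [V_el]
      rfl
    rw [← h12, h9]
  -- now extract the componentwise form of S
  obtain ⟨j₀⟩ := ‹Nonempty ι›
  set a : H₁ →L[ℂ] H₁ := (lpCoord j₀).comp (S.comp (lpSingle j₀)) with ha
  have hav : ∀ v : H₁, a v = (S (lp.single 2 j₀ v) : ∀ _ : ι, H₁) j₀ := fun v => rfl
  have hsingle : ∀ (j : ι) (v : H₁), S (lp.single 2 j v) = lp.single 2 j (a v) := by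
    intro j v
    apply lp.ext; funext i
    rw [single_coord]
    by_cases hij : i = j
    · subst hij
      rw [if_pos rfl]
      apply ext_inner_left ℂ
      intro u
      obtain ⟨lam, hlam⟩ := key u v
      rw [hlam i i, hav, hlam j₀ j₀]
      simp
    · rw [if_neg hij]
      apply ext_inner_left ℂ
      intro u
      obtain ⟨lam, hlam⟩ := key u v
      rw [hlam i j, if_neg hij]
      simp
  exact mem_ASet_of_single hsingle

end Core
end HaagAux


end
-- end of auxiliary namespace

variable {H K : Type*}
  [NormedAddCommGroup H] [InnerProductSpace ℂ H] [CompleteSpace H]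
  [NormedAddCommGroup K] [InnerProductSpace ℂ K] [CompleteSpace K]

namespace HaagAux

lemma uc_apply (U : H ≃ₗᵢ[ℂ] K) (T : H →L[ℂ] H) (x : K) :
    unitaryConj U T x = U (T (U.symm x)) := rfl

lemma uc_mul (U : H ≃ₗᵢ[ℂ] K) (S T : H →L[ℂ] H) :
    unitaryConj U (S * T) = unitaryConj U S * unitaryConj U T := by
  ext x
  simp only [uc_apply, ContinuousLinearMap.mul_apply, LinearIsometryEquiv.symm_apply_apply]

lemma uc_conj_symm (U : H ≃ₗᵢ[ℂ] K) (T : K →L[ℂ] K) :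
    unitaryConj U (unitaryConj U.symm T) = T := by
  ext x
  simp only [uc_apply, LinearIsometryEquiv.symm_symm, LinearIsometryEquiv.apply_symm_apply,
    LinearIsometryEquiv.symm_apply_apply]

lemma uc_symm_conj (U : H ≃ₗᵢ[ℂ] K) (T : H →L[ℂ] H) :
    unitaryConj U.symm (unitaryConj U T) = T := by
  ext x
  simp only [uc_apply, LinearIsometryEquiv.symm_symm, LinearIsometryEquiv.apply_symm_apply,
    LinearIsometryEquiv.symm_apply_apply]

lemma uc_injective (U : H ≃ₗᵢ[ℂ] K) : Function.Injective (unitaryConj U) := by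
  intro S T h
  have h2 := congrArg (unitaryConj U.symm) h
  rwa [uc_symm_conj, uc_symm_conj] at h2

lemma uc_image_centralizer (U : H ≃ₗᵢ[ℂ] K) (s : Set (H →L[ℂ] H)) :
    unitaryConj U '' Set.centralizer s = Set.centralizer (unitaryConj U '' s) := by
  ext W
  constructor
  · rintro ⟨T, hT, rfl⟩
    refine Set.mem_centralizer_iff.mpr ?_
    rintro m ⟨n, hn, rfl⟩
    rw [← uc_mul, ← uc_mul, Set.mem_centralizer_iff.mp hT n hn]
  · intro hW
    refine ⟨unitaryConj U.symm W, ?_, uc_conj_symm U W⟩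
    refine Set.mem_centralizer_iff.mpr fun n hn => ?_
    have h1 : unitaryConj U n ∈ unitaryConj U '' s := ⟨n, hn, rfl⟩
    have h2 := Set.mem_centralizer_iff.mp hW _ h1
    have h3 := congrArg (unitaryConj U.symm) h2
    rwa [uc_mul, uc_mul, uc_symm_conj] at h3

lemma uc_image_univ (U : H ≃ₗᵢ[ℂ] K) :
    unitaryConj U '' (Set.univ : Set (H →L[ℂ] H)) = Set.univ :=
  Set.eq_univ_of_forall fun W => ⟨unitaryConj U.symm W, trivial, uc_conj_symm U W⟩

end HaagAux

/-- Let `U : H → H₁ ⊗ H₂` be a unitary, and `M, N` von Neumann algebras on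
`H` with `N ⊆ M'`, `U M U* = B(H₁) ⊗ 1` and `M ∨ N = B(H)` (expressed by saying that the
double commutant of `M ∪ N` is everything).  Then `U N U* = 1 ⊗ B(H₂)` and consequently
Haag duality `M = N'` holds.

The Hilbert space tensor product `H₁ ⊗ H₂` is modeled as `lp (fun _ : ι => H₁) 2`
(with `ι` indexing an orthonormal basis of `H₂`); `B(H₁) ⊗ 1` is the algebra of
componentwise-acting operators and `1 ⊗ B(H₂)` is the set of operators whose matrix
entries over `ι` are scalars. -/
theorem haag_duality_of_spatial_typeI
    {H₁ : Type*} [NormedAddCommGroup H₁] [InnerProductSpace ℂ H₁] [CompleteSpace H₁]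
    {ι : Type*} [DecidableEq ι]
    (U : H ≃ₗᵢ[ℂ] lp (fun _ : ι => H₁) 2)
    (M N : VonNeumannAlgebra H)
    (hN : (N : Set (H →L[ℂ] H)) ⊆ (M.commutant : Set (H →L[ℂ] H)))
    (hM : unitaryConj U '' (M : Set (H →L[ℂ] H)) =
      {T : lp (fun _ : ι => H₁) 2 →L[ℂ] lp (fun _ : ι => H₁) 2 |
        ∃ a : H₁ →L[ℂ] H₁, ∀ (f : lp (fun _ : ι => H₁) 2) (i : ι),
          (T f : ∀ _ : ι, H₁) i = a ((f : ∀ _ : ι, H₁) i)})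
    (hgen : Set.centralizer
        (Set.centralizer ((M : Set (H →L[ℂ] H)) ∪ (N : Set (H →L[ℂ] H)))) = Set.univ) :
    unitaryConj U '' (N : Set (H →L[ℂ] H)) =
      {T : lp (fun _ : ι => H₁) 2 →L[ℂ] lp (fun _ : ι => H₁) 2 |
        ∀ i j : ι, ∃ c : ℂ, ∀ v : H₁, (T (lp.single 2 j v) : ∀ _ : ι, H₁) i = c • v} ∧
    (M : Set (H →L[ℂ] H)) = (N.commutant : Set (H →L[ℂ] H)) := by
  classical
  by_cases hK : Subsingleton (lp (fun _ : ι => H₁) 2)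
  · -- degenerate case : everything is trivial
    haveI := hK
    haveI hHsub : Subsingleton H := ⟨fun a b => by
      have h := Subsingleton.elim (U a) (U b)
      have h2 := congrArg U.symm h
      simpa using h2⟩
    haveI : Subsingleton (H →L[ℂ] H) :=
      ⟨fun f g => ContinuousLinearMap.ext fun x => Subsingleton.elim _ _⟩
    have hmem : ∀ (W : H →L[ℂ] H) (S : VonNeumannAlgebra H), W ∈ S := by
      intro W S
      have h1 : W = 1 := Subsingleton.elim _ _
      rw [h1]
      exact one_mem S.toStarSubalgebra
    constructor
    · apply Set.eq_of_subset_of_subset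
      · intro T hT i j
        refine ⟨0, fun v => ?_⟩
        have hH₁sub : ∀ x y : H₁, x = y := fun x y => by
          have h1 := congrArg (fun (f : lp (fun _ : ι => H₁) 2) => (f : ∀ _ : ι, H₁) i)
            (Subsingleton.elim (lp.single 2 i x) (lp.single 2 i y))
          simpa [lp.single_apply_self] using h1
        rw [zero_smul]
        exact hH₁sub _ _
      · intro T hT
        exact ⟨unitaryConj U.symm T, hmem _ N, HaagAux.uc_conj_symm U T⟩
    · apply Set.eq_of_subset_of_subset
      · intro T hT
        exact hmem T N.commutant
      · intro T hT
        exact hmem T M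
  · -- main case
    haveI hne : Nonempty ι := by
      by_contra h
      exact hK ⟨fun f g => lp.ext (funext fun i => ((not_nonempty_iff.mp h).elim i))⟩
    obtain ⟨v₀, hv₀⟩ : ∃ v₀ : H₁, ‖v₀‖ = 1 := by
      have hnt : Nontrivial H₁ := by
        rw [← not_subsingleton_iff_nontrivial]
        intro hsub
        exact hK ⟨fun f g => lp.ext (funext fun i => Subsingleton.elim _ _)⟩
      obtain ⟨x, hx⟩ := exists_ne (0 : H₁)
      exact ⟨(‖x‖⁻¹ : ℂ) • x, norm_smul_inv_norm hx⟩
    have hA : unitaryConj U '' (M : Set (H →L[ℂ] H)) = HaagAux.ASet := hM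
    have hcAB := HaagAux.centralizer_ASet_eq_BSet (ι := ι) v₀ hv₀
    have hNsub : (N : Set (H →L[ℂ] H)) ⊆ Set.centralizer (M : Set (H →L[ℂ] H)) := by
      rw [← VonNeumannAlgebra.coe_commutant]
      exact hN
    have hPB : unitaryConj U '' (N : Set (H →L[ℂ] H)) ⊆ HaagAux.BSet := by
      have h1 : unitaryConj U '' (N : Set (H →L[ℂ] H))
          ⊆ unitaryConj U '' Set.centralizer (M : Set (H →L[ℂ] H)) :=
        Set.image_mono hNsub
      rwa [HaagAux.uc_image_centralizer, hA, hcAB] at h1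
    have hscal : ∀ W : lp (fun _ : ι => H₁) 2 →L[ℂ] lp (fun _ : ι => H₁) 2,
        W ∈ HaagAux.BSet → W ∈ Set.centralizer (unitaryConj U '' (N : Set (H →L[ℂ] H))) →
        ∃ c : ℂ, W = c • 1 := by
      intro W hWB hWP
      have hWcent : W ∈ Set.centralizer
          ((unitaryConj U '' (M : Set (H →L[ℂ] H))) ∪ (unitaryConj U '' (N : Set (H →L[ℂ] H)))) := by
        rw [Set.centralizer_union]
        refine ⟨?_, hWP⟩
        rw [hA, hcAB]
        exact hWB
      have hMN : Set.centralizer ((M : Set (H →L[ℂ] H)) ∪ (N : Set (H →L[ℂ] H)))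
          = Set.centralizer (Set.univ : Set (H →L[ℂ] H)) := by
        rw [← Set.centralizer_centralizer_centralizer
          ((M : Set (H →L[ℂ] H)) ∪ (N : Set (H →L[ℂ] H))), hgen]
      rw [← Set.image_union, ← HaagAux.uc_image_centralizer, hMN,
        HaagAux.uc_image_centralizer, HaagAux.uc_image_univ] at hWcent
      exact HaagAux.scalar_of_mem_centralizer_univ v₀ hWcent hv₀
    have hcore := HaagAux.centralizer_subset_ASet hv₀ hPB hscal
    have hAsubcent : HaagAux.ASet (H₁ := H₁) (ι := ι)
        ⊆ Set.centralizer (unitaryConj U '' (N : Set (H →L[ℂ] H))) := by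
      intro a ha
      refine Set.mem_centralizer_iff.mpr fun p hp => ?_
      have hpB := hPB hp
      rw [← hcAB] at hpB
      exact (Set.mem_centralizer_iff.mp hpB a ha).symm
    have hcentP : Set.centralizer (unitaryConj U '' (N : Set (H →L[ℂ] H))) = HaagAux.ASet :=
      Set.Subset.antisymm hcore hAsubcent
    have hPP : Set.centralizer (Set.centralizer (unitaryConj U '' (N : Set (H →L[ℂ] H))))
        = unitaryConj U '' (N : Set (H →L[ℂ] H)) := by
      rw [← HaagAux.uc_image_centralizer, ← HaagAux.uc_image_centralizer,
        N.centralizer_centralizer]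
    constructor
    · show unitaryConj U '' (N : Set (H →L[ℂ] H)) = HaagAux.BSet
      rw [← hPP, hcentP, hcAB]
    · rw [VonNeumannAlgebra.coe_commutant]
      apply Set.image_injective.mpr (HaagAux.uc_injective U)
      rw [HaagAux.uc_image_centralizer, hcentP, hA]
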